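/- Let (X, μ) be a finite measure space, γ > 0, and (u_ε) measurable with c_ε = sup_X |u_ε| → ∞ and λ_ε = ∫ u_ε² e^{γ u_ε²} dμ. Suppose for every τ ∈ (0,1), ∫_X e^{γ·min(u_ε, τ c_ε)²} dμ → μ(X) as ε → 0, and suppose lim_ε ∫_X e^{γ u_ε²} dμ = S > μ(X). Then liminf_{ε→0} λ_ε/c_ε² ≥ S - μ(X) > 0; in particular c_ε/λ_ε → 0. -/

import Mathlib

open MeasureTheory Real Filter

/-- abstract form of Lemma 2.9: if the truncated exponential integrals tend to
μ(X) while the full exponential integrals tend to S > μ(X), then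
liminf λ_ε/c_ε² ≥ S - μ(X) > 0, and in particular c_ε/λ_ε → 0. -/
theorem stmt_18 {X : Type*} [MeasurableSpace X] (μ : Measure X) [IsFiniteMeasure μ]
    (γ S : ℝ) (hγ : 0 < γ)
    (u : ℕ → X → ℝ) (c : ℕ → ℝ)
    (hmeas : ∀ n, Measurable (u n)) (hnonneg : ∀ n x, 0 ≤ u n x)
    (hc : Tendsto c atTop atTop) (hcsup : ∀ n x, |u n x| ≤ c n)
    (hint1 : ∀ n, Integrable (fun x => Real.exp (γ * (u n x) ^ 2)) μ)
    (hint2 : ∀ n, Integrable (fun x => (u n x) ^ 2 * Real.exp (γ * (u n x) ^ 2)) μ)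
    (htrunc : ∀ τ : ℝ, τ ∈ Set.Ioo (0 : ℝ) 1 →
      Tendsto (fun n => ∫ x, Real.exp (γ * (min (u n x) (τ * c n)) ^ 2) ∂μ) atTop
        (nhds (μ Set.univ).toReal))
    (hS : Tendsto (fun n => ∫ x, Real.exp (γ * (u n x) ^ 2) ∂μ) atTop (nhds S))
    (hSgt : (μ Set.univ).toReal < S) :
    S - (μ Set.univ).toReal ≤
        Filter.liminf (fun n =>
          (∫ x, (u n x) ^ 2 * Real.exp (γ * (u n x) ^ 2) ∂μ) / (c n) ^ 2) atTop ∧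
      Tendsto (fun n =>
          c n / ∫ x, (u n x) ^ 2 * Real.exp (γ * (u n x) ^ 2) ∂μ) atTop (nhds 0) := by
  set M : ℝ := (μ Set.univ).toReal with hM
  set I : ℕ → ℝ := fun n => ∫ x, Real.exp (γ * (u n x) ^ 2) ∂μ with hIdef
  set J : ℕ → ℝ := fun n => ∫ x, (u n x) ^ 2 * Real.exp (γ * (u n x) ^ 2) ∂μ with hJdef
  set T : ℝ → ℕ → ℝ :=
    fun τ n => ∫ x, Real.exp (γ * (min (u n x) (τ * c n)) ^ 2) ∂μ with hTdef
  set v : ℕ → ℝ := fun n => J n / (c n) ^ 2 with hvdef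
  have hJ0 : ∀ n, 0 ≤ J n := fun n =>
    integral_nonneg fun x => by positivity
  have hv0 : ∀ n, 0 ≤ v n := fun n => div_nonneg (hJ0 n) (by positivity)
  have hcpos : ∀ᶠ n in atTop, 0 < c n := hc.eventually_gt_atTop 0
  -- the key integral inequality
  have key : ∀ τ ∈ Set.Ioo (0:ℝ) 1, ∀ n, 0 < c n →
      I n ≤ T τ n + J n / (τ * c n) ^ 2 := by
    intro τ hτ n hcn
    obtain ⟨hτ0, hτ1⟩ := hτ
    have hτc : 0 < τ * c n := mul_pos hτ0 hcn
    have hd : 0 < (τ * c n) ^ 2 := pow_pos hτc 2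
    have hTint : Integrable (fun x => Real.exp (γ * (min (u n x) (τ * c n)) ^ 2)) μ := by
      refine (hint1 n).mono' ?_ ?_
      · exact (Real.measurable_exp.comp
          ((measurable_const.mul (((hmeas n).min measurable_const).pow_const 2)))).aestronglyMeasurable
      · refine Eventually.of_forall fun x => ?_
        rw [Real.norm_eq_abs, abs_of_pos (Real.exp_pos _)]
        apply Real.exp_le_exp.2
        apply mul_le_mul_of_nonneg_left _ hγ.le
        apply pow_le_pow_left₀ (le_min (hnonneg n x) hτc.le) (min_le_left _ _)
    have hRint : Integrable
        (fun x => Real.exp (γ * (min (u n x) (τ * c n)) ^ 2)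
          + (u n x) ^ 2 * Real.exp (γ * (u n x) ^ 2) / (τ * c n) ^ 2) μ :=
      hTint.add ((hint2 n).div_const _)
    have hpt : ∀ x, Real.exp (γ * (u n x) ^ 2) ≤
        Real.exp (γ * (min (u n x) (τ * c n)) ^ 2)
          + (u n x) ^ 2 * Real.exp (γ * (u n x) ^ 2) / (τ * c n) ^ 2 := by
      intro x
      rcases le_or_gt (u n x) (τ * c n) with h | h
      · rw [min_eq_left h]
        have h2 : 0 ≤ (u n x) ^ 2 * Real.exp (γ * (u n x) ^ 2) / (τ * c n) ^ 2 := by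
          positivity
        linarith
      · have h2 : (τ * c n) ^ 2 ≤ (u n x) ^ 2 :=
          pow_le_pow_left₀ hτc.le h.le 2
        have hE : 0 < Real.exp (γ * (u n x) ^ 2) := Real.exp_pos _
        have h3 : Real.exp (γ * (u n x) ^ 2) ≤
            (u n x) ^ 2 * Real.exp (γ * (u n x) ^ 2) / (τ * c n) ^ 2 := by
          rw [le_div_iff₀ hd]
          nlinarith
        have h4 : 0 < Real.exp (γ * (min (u n x) (τ * c n)) ^ 2) := Real.exp_pos _
        linarith
    calc I n ≤ ∫ x, (Real.exp (γ * (min (u n x) (τ * c n)) ^ 2)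
          + (u n x) ^ 2 * Real.exp (γ * (u n x) ^ 2) / (τ * c n) ^ 2) ∂μ :=
          integral_mono (hint1 n) hRint hpt
      _ = T τ n + J n / (τ * c n) ^ 2 := by
          rw [integral_add hTint ((hint2 n).div_const _), integral_div]
  -- consequence: eventually τ² (I n - T τ n) ≤ v n
  have key2 : ∀ τ ∈ Set.Ioo (0:ℝ) 1,
      ∀ᶠ n in atTop, τ ^ 2 * (I n - T τ n) ≤ v n := by
    intro τ hτ
    filter_upwards [hcpos] with n hcn
    have h := key τ hτ n hcn
    have hcn2 : 0 < (c n) ^ 2 := pow_pos hcn 2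
    have : J n / (τ * c n) ^ 2 = (J n / (c n) ^ 2) / τ ^ 2 := by
      rw [mul_pow]; rw [div_div]; ring_nf
    rw [this] at h
    have hτ2 : 0 < τ ^ 2 := pow_pos hτ.1 2
    rw [hvdef]
    calc τ ^ 2 * (I n - T τ n) ≤ τ ^ 2 * ((J n / (c n) ^ 2) / τ ^ 2) := by
          apply mul_le_mul_of_nonneg_left _ hτ2.le; linarith
      _ = J n / (c n) ^ 2 := by rw [mul_div_assoc']; exact mul_div_cancel_left₀ _ hτ2.ne'
  -- boundedness of v
  have hvS : ∀ᶠ n in atTop, v n ≤ S + 1 := by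
    have hJI : ∀ n, 0 < c n → v n ≤ I n := by
      intro n hcn
      have : J n ≤ (c n) ^ 2 * I n := by
        rw [hJdef, hIdef]
        simp only
        rw [← integral_const_mul]
        refine integral_mono (hint2 n) ((hint1 n).const_mul _) fun x => ?_
        have h1 : (u n x) ^ 2 ≤ (c n) ^ 2 :=
          pow_le_pow_left₀ (hnonneg n x) ((abs_le.1 (hcsup n x)).2) 2
        have := (Real.exp_pos (γ * (u n x) ^ 2)).le
        nlinarith
      rw [hvdef]
      exact (div_le_iff₀ (pow_pos hcn 2)).2 (by linarith [this, mul_comm ((c n)^2) (I n)])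
    have hIS : ∀ᶠ n in atTop, I n < S + 1 := hS.eventually_lt_const (by linarith)
    filter_upwards [hcpos, hIS] with n h1 h2
    exact (hJI n h1).trans h2.le
  have hvcobdd : IsCoboundedUnder (· ≥ ·) atTop v :=
    isCoboundedUnder_ge_of_eventually_le atTop hvS
  -- liminf bound for each τ
  have hlim : ∀ τ ∈ Set.Ioo (0:ℝ) 1, τ ^ 2 * (S - M) ≤ liminf v atTop := by
    intro τ hτ
    have hTend : Tendsto (fun n => τ ^ 2 * (I n - T τ n)) atTop
        (nhds (τ ^ 2 * (S - M))) := (hS.sub (htrunc τ hτ)).const_mul _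
    have h1 : liminf (fun n => τ ^ 2 * (I n - T τ n)) atTop = τ ^ 2 * (S - M) :=
      hTend.liminf_eq
    calc τ ^ 2 * (S - M) = liminf (fun n => τ ^ 2 * (I n - T τ n)) atTop := h1.symm
      _ ≤ liminf v atTop :=
          liminf_le_liminf (key2 τ hτ) hTend.isBoundedUnder_ge hvcobdd
  -- let τ → 1⁻
  have hmain : S - M ≤ liminf v atTop := by
    have htend1 : Tendsto (fun τ : ℝ => τ ^ 2 * (S - M)) (nhdsWithin 1 (Set.Iio 1))
        (nhds (S - M)) := by
      have : Tendsto (fun τ : ℝ => τ ^ 2 * (S - M)) (nhds 1) (nhds (1 ^ 2 * (S - M))) :=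
        ((continuous_pow 2).mul continuous_const).tendsto 1
      simpa using this.mono_left nhdsWithin_le_nhds
    refine le_of_tendsto htend1 ?_
    filter_upwards [Ioo_mem_nhdsLT_of_mem (by constructor <;> norm_num :
        (1:ℝ) ∈ Set.Ioc (0:ℝ) 1)] with τ hτ
    exact hlim τ hτ
  refine ⟨hmain, ?_⟩
  -- second part: c n / J n → 0
  set k : ℝ := (S - M) / 2 with hk
  have hkpos : 0 < k := by rw [hk]; linarith
  have hτ0 : (4/5 : ℝ) ∈ Set.Ioo (0:ℝ) 1 := by constructor <;> norm_num
  have hTend : Tendsto (fun n => (4/5:ℝ) ^ 2 * (I n - T (4/5) n)) atTop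
      (nhds ((4/5:ℝ) ^ 2 * (S - M))) := (hS.sub (htrunc _ hτ0)).const_mul _
  have hkey : ∀ᶠ n in atTop, k < (4/5:ℝ) ^ 2 * (I n - T (4/5) n) :=
    hTend.eventually_const_lt (by rw [hk]; nlinarith)
  have hJlb : ∀ᶠ n in atTop, k * (c n) ^ 2 ≤ J n := by
    filter_upwards [hkey, key2 (4/5) hτ0, hcpos] with n h1 h2 h3
    have : k ≤ v n := le_trans h1.le h2
    rw [hvdef] at this
    have hcn2 : 0 < (c n) ^ 2 := pow_pos h3 2
    calc k * (c n) ^ 2 ≤ (J n / (c n) ^ 2) * (c n) ^ 2 :=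
          mul_le_mul_of_nonneg_right this hcn2.le
      _ = J n := by field_simp
  have hub : Tendsto (fun n => 1 / (k * c n)) atTop (nhds 0) := by
    have h2 : Tendsto (fun n => (k * c n)⁻¹) atTop (nhds 0) :=
      (hc.const_mul_atTop hkpos).inv_tendsto_atTop
    simp only [one_div]
    exact h2
  refine tendsto_of_tendsto_of_tendsto_of_le_of_le' tendsto_const_nhds hub ?_ ?_
  · filter_upwards [hJlb, hcpos] with n h1 h2
    have hJpos : 0 < J n := lt_of_lt_of_le (mul_pos hkpos (pow_pos h2 2)) h1
    positivity
  · filter_upwards [hJlb, hcpos] with n h1 h2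
    have hJpos : 0 < J n := lt_of_lt_of_le (mul_pos hkpos (pow_pos h2 2)) h1
    have : c n / J n ≤ c n / (k * (c n) ^ 2) :=
      div_le_div_of_nonneg_left h2.le (mul_pos hkpos (pow_pos h2 2)) h1
    calc c n / J n ≤ c n / (k * (c n) ^ 2) := this
      _ = 1 / (k * c n) := by field_simp
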